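/- Let B be the k-algebra k⟨v_1, v_2⟩/(v_1^2, v_1v_2 - ξ^j v_2v_1, v_2^4) where ξ is a primitive 4th root of unity and j ∈ {1, 3}. Then B has dimension 8 over k, with basis {v_2^m v_1^n : 0 ≤ m ≤ 3, 0 ≤ n ≤ 1}. -/

import Mathlib

/- Relations of the Nichols algebra `B = k⟨v₁,v₂⟩/(v₁², v₁v₂ - ξ^j v₂v₁, v₂⁴)`,
with generators v₁ (= 0) and v₂ (= 1). -/
inductive BRel (k : Type*) [Field k] (ξ : k) (j : ℕ) :
    FreeAlgebra k (Fin 2) → FreeAlgebra k (Fin 2) → Prop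
  | r1 : BRel k ξ j ((FreeAlgebra.ι k (0 : Fin 2)) ^ 2) 0
  | r2 : BRel k ξ j (FreeAlgebra.ι k (0 : Fin 2) * FreeAlgebra.ι k (1 : Fin 2))
      (ξ ^ j • (FreeAlgebra.ι k (1 : Fin 2) * FreeAlgebra.ι k (0 : Fin 2)))
  | r3 : BRel k ξ j ((FreeAlgebra.ι k (1 : Fin 2)) ^ 4) 0

section Aux13

variable {k : Type*} [Field k]

/-- the action of v₁ on the model space -/
def A1' (c : k) : (Fin 4 × Fin 2 → k) →ₗ[k] (Fin 4 × Fin 2 → k) where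
  toFun v p := if (p.2 : ℕ) = 1 then c ^ (p.1 : ℕ) * v (p.1, 0) else 0
  map_add' x y := by
    funext p; by_cases h : (p.2 : ℕ) = 1 <;> simp [h, mul_add]
  map_smul' a x := by
    funext p; by_cases h : (p.2 : ℕ) = 1 <;> simp [h]; ring

/-- the action of v₂ on the model space -/
def A2' : (Fin 4 × Fin 2 → k) →ₗ[k] (Fin 4 × Fin 2 → k) where
  toFun v p := if (p.1 : ℕ) = 0 then 0 else v (p.1 - 1, p.2)
  map_add' x y := by
    funext p; by_cases h : (p.1 : ℕ) = 0 <;> simp at h <;> simp [h]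
  map_smul' a x := by
    funext p; by_cases h : (p.1 : ℕ) = 0 <;> simp at h <;> simp [h]

@[simp] lemma A1'_apply (c : k) (v : Fin 4 × Fin 2 → k) (p : Fin 4 × Fin 2) :
    A1' c v p = if (p.2 : ℕ) = 1 then c ^ (p.1 : ℕ) * v (p.1, 0) else 0 := rfl

@[simp] lemma A2'_apply (v : Fin 4 × Fin 2 → k) (p : Fin 4 × Fin 2) :
    A2' v p = if (p.1 : ℕ) = 0 then 0 else v (p.1 - 1, p.2) := rfl

lemma A1'_sq (c : k) : (A1' c) ^ 2 = 0 := by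
  ext v p
  simp only [pow_two, Module.End.mul_apply, A1'_apply, LinearMap.zero_apply]
  by_cases h : (p.2 : ℕ) = 1 <;> simp [h]

lemma A2'_pow4 : (A2' (k := k)) ^ 4 = 0 := by
  ext v p
  obtain ⟨m, n⟩ := p
  fin_cases m <;>
    simp [show (4 : ℕ) = 3 + 1 from rfl, pow_succ, pow_two, Module.End.mul_apply]

lemma A1'_A2' (c : k) : (A1' c) * A2' = c • (A2' * A1' c) := by
  ext v p
  obtain ⟨m, n⟩ := p
  fin_cases m <;> fin_cases n <;>
    simp [Module.End.mul_apply, pow_succ,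
      show ((1 : Fin 4) : ℕ) = 1 from rfl, show ((2 : Fin 4) : ℕ) = 2 from rfl,
      show ((3 : Fin 4) : ℕ) = 3 from rfl] <;> ring

lemma A1'_e0 (c : k) :
    A1' c (Pi.single ((0 : Fin 4), (0 : Fin 2)) 1) =
      Pi.single ((0 : Fin 4), (1 : Fin 2)) 1 := by
  funext q
  obtain ⟨a, b⟩ := q
  fin_cases a <;> fin_cases b <;>
    simp [Pi.single_apply, Prod.ext_iff]

lemma A2'_e0 (n : Fin 2) :
    A2' (Pi.single ((0 : Fin 4), n) 1) = Pi.single ((1 : Fin 4), n) (1 : k) := by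
  funext q
  obtain ⟨a, b⟩ := q
  fin_cases a <;>
    simp [Pi.single_apply, Prod.ext_iff, show ((1:Fin 4):ℕ) = 1 from rfl,
      show ((2:Fin 4):ℕ) = 2 from rfl, show ((3:Fin 4):ℕ) = 3 from rfl]

lemma A2'_e1 (n : Fin 2) :
    A2' (Pi.single ((1 : Fin 4), n) 1) = Pi.single ((2 : Fin 4), n) (1 : k) := by
  funext q
  obtain ⟨a, b⟩ := q
  fin_cases a <;>
    simp [Pi.single_apply, Prod.ext_iff, show ((1:Fin 4):ℕ) = 1 from rfl,
      show ((2:Fin 4):ℕ) = 2 from rfl, show ((3:Fin 4):ℕ) = 3 from rfl]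

lemma A2'_e2 (n : Fin 2) :
    A2' (Pi.single ((2 : Fin 4), n) 1) = Pi.single ((3 : Fin 4), n) (1 : k) := by
  funext q
  obtain ⟨a, b⟩ := q
  fin_cases a <;>
    simp [Pi.single_apply, Prod.ext_iff, show ((1:Fin 4):ℕ) = 1 from rfl,
      show ((2:Fin 4):ℕ) = 2 from rfl, show ((3:Fin 4):ℕ) = 3 from rfl]

lemma model_pow (c : k) (m : Fin 4) (n : Fin 2) :
    (A2' ^ (m : ℕ) * (A1' c) ^ (n : ℕ) : Module.End k (Fin 4 × Fin 2 → k))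
      (Pi.single ((0 : Fin 4), (0 : Fin 2)) 1) = Pi.single (m, n) 1 := by
  fin_cases m <;> fin_cases n <;>
    simp only [Fin.isValue, show ((0:Fin 4):ℕ) = 0 from rfl,
      show ((1:Fin 4):ℕ) = 1 from rfl, show ((2:Fin 4):ℕ) = 2 from rfl,
      show ((3:Fin 4):ℕ) = 3 from rfl, show ((0:Fin 2):ℕ) = 0 from rfl,
      show ((1:Fin 2):ℕ) = 1 from rfl,
      pow_succ, pow_zero, one_mul, Module.End.mul_apply, Module.End.one_apply,
      A1'_e0, A2'_e0, A2'_e1, A2'_e2] <;> rfl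

end Aux13

/-- `B = k⟨v₁,v₂⟩/(v₁², v₁v₂ - ξ^j v₂v₁, v₂⁴)` has dimension 8 over `k`, with
basis `{v₂^m v₁^n : 0 ≤ m ≤ 3, 0 ≤ n ≤ 1}`. -/
theorem stmt13 (k : Type*) [Field k] [IsAlgClosed k] [CharZero k]
    (ξ : k) (hξ : IsPrimitiveRoot ξ 4) (j : ℕ) (hj : j = 1 ∨ j = 3) :
    Module.finrank k (RingQuot (BRel k ξ j)) = 8 ∧
    ∃ bB : Module.Basis (Fin 4 × Fin 2) k (RingQuot (BRel k ξ j)),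
      ∀ p : Fin 4 × Fin 2, bB p =
        RingQuot.mkAlgHom k (BRel k ξ j) (FreeAlgebra.ι k (1 : Fin 2)) ^ (p.1 : ℕ) *
        RingQuot.mkAlgHom k (BRel k ξ j) (FreeAlgebra.ι k (0 : Fin 2)) ^ (p.2 : ℕ) := by
  classical
  set c : k := ξ ^ j with hc
  set mk := RingQuot.mkAlgHom k (BRel k ξ j) with hmk
  set w1 : RingQuot (BRel k ξ j) := mk (FreeAlgebra.ι k (0 : Fin 2)) with hw1
  set w2 : RingQuot (BRel k ξ j) := mk (FreeAlgebra.ι k (1 : Fin 2)) with hw2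
  have h1 : w1 ^ 2 = 0 := by
    have := RingQuot.mkAlgHom_rel k (BRel.r1 (k := k) (ξ := ξ) (j := j))
    simpa [← hmk, ← hw1] using this
  have h2 : w1 * w2 = c • (w2 * w1) := by
    have := RingQuot.mkAlgHom_rel k (BRel.r2 (k := k) (ξ := ξ) (j := j))
    simpa [← hmk, ← hw1, ← hw2, ← hc] using this
  have h3 : w2 ^ 4 = 0 := by
    have := RingQuot.mkAlgHom_rel k (BRel.r3 (k := k) (ξ := ξ) (j := j))
    simpa [← hmk, ← hw2] using this
  have hcomm : ∀ m : ℕ, w1 * w2 ^ m = c ^ m • (w2 ^ m * w1) := by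
    intro m
    induction m with
    | zero => simp
    | succ m ih =>
      calc w1 * w2 ^ (m + 1) = (w1 * w2 ^ m) * w2 := by rw [pow_succ, mul_assoc]
        _ = c ^ m • (w2 ^ m * (w1 * w2)) := by rw [ih, smul_mul_assoc, mul_assoc]
        _ = c ^ m • (w2 ^ m • (c • (w2 * w1))) := by rw [h2]; rfl
        _ = c ^ (m + 1) • (w2 ^ (m + 1) * w1) := by
            rw [smul_comm (w2 ^ m)]
            simp only [smul_eq_mul, smul_smul, ← mul_assoc, ← pow_succ]
  -- the candidate basis family
  set fB : Fin 4 × Fin 2 → RingQuot (BRel k ξ j) :=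
    fun p => w2 ^ (p.1 : ℕ) * w1 ^ (p.2 : ℕ) with hfB
  set S : Submodule k (RingQuot (BRel k ξ j)) := Submodule.span k (Set.range fB) with hS
  have hmem : ∀ a b : ℕ, w2 ^ a * w1 ^ b ∈ S := by
    intro a b
    by_cases ha : a < 4
    · by_cases hb : b < 2
      · exact Submodule.subset_span ⟨(⟨a, ha⟩, ⟨b, hb⟩), rfl⟩
      · have hb0 : w1 ^ b = 0 := by
          have : b = 2 + (b - 2) := by omega
          rw [this, pow_add, h1, zero_mul]
        rw [hb0, mul_zero]; exact zero_mem _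
    · have ha0 : w2 ^ a = 0 := by
        have : a = 4 + (a - 4) := by omega
        rw [this, pow_add, h3, zero_mul]
      rw [ha0, zero_mul]; exact zero_mem _
  have hprod : ∀ (m n m' n' : ℕ), n < 2 →
      (w2 ^ m * w1 ^ n) * (w2 ^ m' * w1 ^ n') =
        (c ^ (n * m')) • (w2 ^ (m + m') * w1 ^ (n + n')) := by
    intro m n m' n' hn
    interval_cases n
    · simp [pow_add, mul_assoc]
    · calc (w2 ^ m * w1 ^ 1) * (w2 ^ m' * w1 ^ n')
          = w2 ^ m * ((w1 * w2 ^ m') * w1 ^ n') := by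
            simp only [pow_one, mul_assoc]
        _ = w2 ^ m * ((c ^ m' • (w2 ^ m' * w1)) * w1 ^ n') := by rw [hcomm]
        _ = (c ^ (1 * m')) • (w2 ^ (m + m') * w1 ^ (1 + n')) := by
            rw [smul_mul_assoc, mul_smul_comm, one_mul, pow_add, pow_add, pow_one]
            congr 1
            simp [mul_assoc]
  have hmul : ∀ x ∈ S, ∀ y ∈ S, x * y ∈ S := by
    intro x hx
    induction hx using Submodule.span_induction with
    | mem x hxx =>
      obtain ⟨p, rfl⟩ := hxx
      intro y hy
      induction hy using Submodule.span_induction with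
      | mem y hyy =>
        obtain ⟨q, rfl⟩ := hyy
        rw [hfB]
        simp only
        rw [hprod _ _ _ _ (by omega : ((p.2 : ℕ)) < 2)]
        exact Submodule.smul_mem _ _ (hmem _ _)
      | zero => rw [mul_zero]; exact zero_mem _
      | add y z _ _ hy hz => rw [mul_add]; exact add_mem hy hz
      | smul a y _ hy => rw [mul_smul_comm]; exact Submodule.smul_mem _ _ hy
    | zero => intro y hy; rw [zero_mul]; exact zero_mem _
    | add x z _ _ hx hz => intro y hy; rw [add_mul]; exact add_mem (hx y hy) (hz y hy)
    | smul a x _ hx => intro y hy; rw [smul_mul_assoc]; exact Submodule.smul_mem _ _ (hx y hy)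
  have hone : (1 : RingQuot (BRel k ξ j)) ∈ S := by
    simpa using hmem 0 0
  have hSall : ∀ x : FreeAlgebra k (Fin 2), mk x ∈ S := by
    intro x
    induction x using FreeAlgebra.induction with
    | grade0 r =>
      rw [AlgHom.commutes, Algebra.algebraMap_eq_smul_one]
      exact Submodule.smul_mem _ _ hone
    | grade1 i =>
      fin_cases i
      · simpa using hmem 0 1
      · simpa using hmem 1 0
    | mul a b ha hb => rw [map_mul]; exact hmul _ ha _ hb
    | add a b ha hb => rw [map_add]; exact add_mem ha hb
  have hspan : Submodule.span k (Set.range fB) = ⊤ := by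
    rw [eq_top_iff]
    rintro x -
    obtain ⟨y, rfl⟩ := RingQuot.mkAlgHom_surjective k _ x
    exact hSall y
  -- linear independence via the concrete representation
  set φ0 : FreeAlgebra k (Fin 2) →ₐ[k] Module.End k (Fin 4 × Fin 2 → k) :=
    FreeAlgebra.lift k ![A1' c, A2'] with hφ0
  have hφ0ι0 : φ0 (FreeAlgebra.ι k (0 : Fin 2)) = A1' c := by
    rw [hφ0, FreeAlgebra.lift_ι_apply]; rfl
  have hφ0ι1 : φ0 (FreeAlgebra.ι k (1 : Fin 2)) = A2' := by
    rw [hφ0, FreeAlgebra.lift_ι_apply]; rfl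
  have hrel : ∀ ⦃x y⦄, BRel k ξ j x y → φ0 x = φ0 y := by
    intro x y h
    cases h with
    | r1 => rw [map_pow, hφ0ι0, map_zero, A1'_sq]
    | r2 =>
      rw [map_mul, map_smul, map_mul, hφ0ι0, hφ0ι1, ← hc]
      exact A1'_A2' c
    | r3 => rw [map_pow, hφ0ι1, map_zero, A2'_pow4]
  set φ : RingQuot (BRel k ξ j) →ₐ[k] Module.End k (Fin 4 × Fin 2 → k) :=
    RingQuot.liftAlgHom k ⟨φ0, hrel⟩ with hφ
  have hφmk : ∀ x, φ (mk x) = φ0 x := fun x =>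
    RingQuot.liftAlgHom_mkAlgHom_apply k φ0 hrel x
  set e0 : Fin 4 × Fin 2 → k := Pi.single ((0 : Fin 4), (0 : Fin 2)) 1 with he0
  set ev : RingQuot (BRel k ξ j) →ₗ[k] (Fin 4 × Fin 2 → k) :=
    (LinearMap.applyₗ e0).comp φ.toLinearMap with hev
  have hφw1 : φ w1 = A1' c := by rw [hw1, hφmk, hφ0ι0]
  have hφw2 : φ w2 = A2' := by rw [hw2, hφmk, hφ0ι1]
  have hevfB : ∀ p : Fin 4 × Fin 2, ev (fB p) = Pi.single p 1 := by
    intro p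
    have h : ev (fB p) = ((A2' ^ (p.1 : ℕ) * (A1' c) ^ (p.2 : ℕ) :
        Module.End k (Fin 4 × Fin 2 → k))) e0 := by
      rw [hev, hfB]
      simp only [LinearMap.coe_comp, Function.comp_apply, AlgHom.toLinearMap_apply,
        LinearMap.applyₗ_apply_apply, map_mul, map_pow, hφw1, hφw2]
    rw [h, he0, model_pow]
  have hind : LinearIndependent k fB := by
    have hcomp : LinearIndependent k (ev ∘ fB) := by
      have : (ev ∘ fB) = ⇑(Pi.basisFun k (Fin 4 × Fin 2)) := by
        funext p
        rw [Function.comp_apply, hevfB, Pi.basisFun_apply]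
      rw [this]
      exact (Pi.basisFun k (Fin 4 × Fin 2)).linearIndependent
    exact hcomp.of_comp ev
  let bB : Module.Basis (Fin 4 × Fin 2) k (RingQuot (BRel k ξ j)) :=
    Module.Basis.mk hind (by rw [hspan])
  refine ⟨?_, bB, ?_⟩
  · rw [Module.finrank_eq_card_basis bB]
    simp
  · intro p
    rw [Module.Basis.mk_apply]
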